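/- arXiv:2006.04961 — 4 statements merged into one kernel-verified Lean document; each statement's English description precedes it below -/
import Mathlib

section
/- Let q be a prime power and let γ, δ1 ∈ F_{q^5} with γ ∉ F_q. If 1, γ, γδ1 are linearly independent over F_q, then for all b1, b2, b3, b4 ∈ F_q it is impossible that γ^2 δ1 = b1 + b2 γ + b3 γ^2 + b4 γ δ1 together with b1 + b2 b4 + b3 b4^2 = 0. (Equivalently: (γ - b4)(γδ1 - b2 - b3(γ + b4)) ≠ 0 under these hypotheses.) -/
/-- If `1, γ, γδ₁` are `F_q`-linearly independent (with `γ ∉ F_q`), then for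
all `b₁, b₂, b₃, b₄ ∈ F_q` it is impossible that simultaneously
`γ²δ₁ = b₁ + b₂γ + b₃γ² + b₄γδ₁` and `b₁ + b₂b₄ + b₃b₄² = 0`. -/
theorem stmt_4 {q : ℕ} (hq : IsPrimePow q) (F K : Type*) [Field F] [Fintype F]
    [Field K] [Algebra F K] (hF : Fintype.card F = q) (hK : Module.finrank F K = 5)
    (γ δ1 : K) (hγ : γ ∉ Set.range (algebraMap F K))
    (hind : LinearIndependent F ![(1 : K), γ, γ * δ1]) (b1 b2 b3 b4 : F) :
    ¬ (γ ^ 2 * δ1 = algebraMap F K b1 + algebraMap F K b2 * γ + algebraMap F K b3 * γ ^ 2 +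
        algebraMap F K b4 * (γ * δ1) ∧
      b1 + b2 * b4 + b3 * b4 ^ 2 = 0) := by
  rintro ⟨h1, h2⟩
  set a := algebraMap F K with ha
  have h2' : a b1 + a b2 * a b4 + a b3 * a b4 ^ 2 = 0 := by
    have := congrArg a h2
    simpa [map_add, map_mul, map_pow] using this
  have hfac : (γ - a b4) * (γ * δ1 - a b2 - a b3 * (γ + a b4)) = 0 := by
    have : (γ - a b4) * (γ * δ1 - a b2 - a b3 * (γ + a b4)) =
        γ ^ 2 * δ1 - (a b1 + a b2 * γ + a b3 * γ ^ 2 + a b4 * (γ * δ1))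
          + (a b1 + a b2 * a b4 + a b3 * a b4 ^ 2) := by ring
    rw [this, ← h1, h2']
    ring
  have hne : γ - a b4 ≠ 0 := by
    intro h
    exact hγ ⟨b4, (sub_eq_zero.mp h).symm⟩
  have hz : γ * δ1 - a b2 - a b3 * (γ + a b4) = 0 :=
    (mul_eq_zero.mp hfac).resolve_left hne
  have hcomb : (b2 + b3 * b4) • (1 : K) + b3 • γ + (-1 : F) • (γ * δ1) = 0 := by
    simp only [Algebra.smul_def, map_add, map_mul, map_neg, map_one]
    rw [← ha]; linear_combination -hz
  have := Fintype.linearIndependent_iff.mp hind ![b2 + b3 * b4, b3, -1] (by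
    simpa [Fin.sum_univ_three] using hcomb) 2
  simp at this
end

section
/- Let q be a prime power. A line of PG(4, q^5) disjoint from a canonical subgeometry Σ ≅ PG(4,q) meets the set Ω2 of rank-2 points (points lying on the extension of some line of Σ but not in Σ) in exactly 0, 1, 2, q+1 or q^2+q+1 points. -/
/-- The canonical subgeometry `Σ ≅ PG(4,q)` of `PG(4,q⁵)`: points admitting homogeneous
coordinates in `F_q⁵`. -/
def sigmaSet (F K : Type*) [Field F] [Field K] [Algebra F K] :
    Set (Projectivization K (Fin 5 → K)) :=
  {P | ∃ (w : Fin 5 → F) (c : K), P.rep = c • (fun i => algebraMap F K (w i))}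

/-- The set `Ω₂` of rank-2 points: points not in `Σ` lying on the extension of a line
of `Σ` (the line of `PG(4,q⁵)` spanned by two distinct points of `Σ`). -/
def omega2Set (F K : Type*) [Field F] [Field K] [Algebra F K] :
    Set (Projectivization K (Fin 5 → K)) :=
  {P | P ∉ sigmaSet F K ∧ ∃ Q1 Q2 : Projectivization K (Fin 5 → K),
    Q1 ∈ sigmaSet F K ∧ Q2 ∈ sigmaSet F K ∧ Q1 ≠ Q2 ∧
    P.rep ∈ Submodule.span K ({Q1.rep, Q2.rep} : Set (Fin 5 → K))}


open Module

namespace Stmt7Aux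

variable {F K : Type*} [Field F] [Field K] [Algebra F K]

/-- componentwise algebraMap -/
def phi (F : Type*) {K : Type*} [Field F] [Field K] [Algebra F K] (w : Fin 5 → F) :
    Fin 5 → K := fun i => algebraMap F K (w i)

/-- rank at most 1 -/
def low1 (F : Type*) {K : Type*} [Field F] [Field K] [Algebra F K] (z : Fin 5 → K) : Prop :=
  ∃ (c : K) (w : Fin 5 → F), z = c • phi F w

/-- rank at most 2 -/
def low2 (F : Type*) {K : Type*} [Field F] [Field K] [Algebra F K] (z : Fin 5 → K) : Prop :=
  ∃ (α β : K) (u v : Fin 5 → F), z = α • phi F u + β • phi F v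

@[simp] lemma phi_apply (w : Fin 5 → F) (i : Fin 5) : phi F w i = algebraMap F K (w i) := rfl

lemma amap_ne_zero {s : F} (hs : s ≠ 0) : algebraMap F K s ≠ 0 := by
  simpa using (map_ne_zero_iff _ (algebraMap F K).injective).mpr hs

lemma phi_eq_zero_iff {w : Fin 5 → F} : (phi F w : Fin 5 → K) = 0 ↔ w = 0 := by
  constructor
  · intro h; funext i
    have := congrFun h i
    exact (algebraMap F K).injective (by simpa using this)
  · rintro rfl; funext i; simp [phi]

lemma low1_smul {z : Fin 5 → K} (c : K) (h : low1 F z) : low1 F (c • z) := by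
  obtain ⟨d, w, rfl⟩ := h
  exact ⟨c * d, w, by rw [smul_smul]⟩

lemma low2_smul {z : Fin 5 → K} (c : K) (h : low2 F z) : low2 F (c • z) := by
  obtain ⟨α, β, u, v, rfl⟩ := h
  exact ⟨c * α, c * β, u, v, by rw [smul_add, smul_smul, smul_smul]⟩

/-- from a nontrivial `F`-relation between the two coefficients, rank ≤ 1;
version with second coefficient nonzero -/
lemma low1_of_rel2 {z : Fin 5 → K} {c1 c2 : K} {f1 f2 : Fin 5 → F}
    (hz : z = c1 • phi F f1 + c2 • phi F f2) {s1 s2 : F} (hs2 : s2 ≠ 0)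
    (hrel : s1 • c1 + s2 • c2 = 0) : low1 F z := by
  refine ⟨c1, f1 + (-(s1/s2)) • f2, ?_⟩
  have hs2' : algebraMap F K s2 ≠ 0 := amap_ne_zero hs2
  have hc2 : c2 = algebraMap F K (-(s1/s2)) * c1 := by
    simp only [Algebra.smul_def] at hrel
    rw [map_neg, map_div₀]
    field_simp
    linear_combination hrel
  rw [hz, hc2]
  funext i
  simp only [phi_apply, Pi.add_apply, Pi.smul_apply, smul_eq_mul]
  simp only [phi_apply, Pi.add_apply, Pi.smul_apply, smul_eq_mul, Algebra.smul_def, map_add,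
    map_neg, map_div₀, Pi.neg_apply, map_mul]
  field_simp

/-- from a nontrivial `F`-relation between the two vectors, rank ≤ 1 -/
lemma low1_of_relv {z : Fin 5 → K} {c1 c2 : K} {f1 f2 : Fin 5 → F}
    (hz : z = c1 • phi F f1 + c2 • phi F f2) {s1 s2 : F} (hs2 : s2 ≠ 0)
    (hrel : s1 • f1 + s2 • f2 = 0) : low1 F z := by
  refine ⟨c1 + (algebraMap F K (-(s1/s2))) * c2, f1, ?_⟩
  have hf2 : f2 = (-(s1/s2)) • f1 := by
    have h5 : s2 • f2 = -(s1 • f1) := eq_neg_of_add_eq_zero_right hrel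
    calc f2 = (s2⁻¹ * s2) • f2 := by rw [inv_mul_cancel₀ hs2, one_smul]
    _ = s2⁻¹ • (s2 • f2) := by rw [mul_smul]
    _ = s2⁻¹ • (-(s1 • f1)) := by rw [h5]
    _ = (-(s1/s2)) • f1 := by rw [smul_neg, smul_smul, ← neg_smul]; ring_nf
  rw [hz, hf2]
  funext i
  simp only [phi_apply, Pi.add_apply, Pi.smul_apply, smul_eq_mul]
  simp only [phi_apply, Pi.add_apply, Pi.smul_apply, smul_eq_mul, Algebra.smul_def, map_neg,
    map_div₀, Pi.neg_apply, map_mul]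
  field_simp

/-- coefficients of a rank-2 expression of a non-rank-1 vector are `F`-independent -/
lemma coeff_indep {z : Fin 5 → K} (h1 : ¬ low1 F z) {c1 c2 : K} {f1 f2 : Fin 5 → F}
    (hz : z = c1 • phi F f1 + c2 • phi F f2) :
    ∀ s t : F, s • c1 + t • c2 = 0 → s = 0 ∧ t = 0 := by
  intro s t h
  by_cases ht : t = 0
  · subst ht
    by_cases hs : s = 0
    · exact ⟨hs, rfl⟩
    · exfalso; apply h1
      refine low1_of_rel2 (c1 := c2) (c2 := c1) (f1 := f2) (f2 := f1) (s1 := 0)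
        (by rw [hz, add_comm]) hs (by rw [add_comm]; simpa using h)
  · exact absurd (h1 (low1_of_rel2 hz ht h)) not_false

/-- vectors of a rank-2 expression of a non-rank-1 vector are `F`-independent -/
lemma vec_indep {z : Fin 5 → K} (h1 : ¬ low1 F z) {c1 c2 : K} {f1 f2 : Fin 5 → F}
    (hz : z = c1 • phi F f1 + c2 • phi F f2) :
    ∀ s t : F, s • f1 + t • f2 = 0 → s = 0 ∧ t = 0 := by
  intro s t h
  by_cases ht : t = 0
  · subst ht
    by_cases hs : s = 0
    · exact ⟨hs, rfl⟩
    · exfalso; apply h1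
      refine low1_of_relv (c1 := c2) (c2 := c1) (f1 := f2) (f2 := f1) (s1 := 0)
        (by rw [hz, add_comm]) hs (by rw [add_comm]; simpa using h)
  · exact absurd (h1 (low1_of_relv hz ht h)) not_false





/-- range of `![a, b]` -/
lemma range_pair {M : Type*} (a b : M) : Set.range ![a, b] = {a, b} := by
  ext x
  constructor
  · rintro ⟨i, rfl⟩
    fin_cases i <;> simp [Matrix.cons_val_zero, Matrix.cons_val_one]
  · rintro (rfl | rfl)
    · exact ⟨0, rfl⟩
    · exact ⟨1, rfl⟩

lemma finrank_span_pair_le {M : Type*} [AddCommGroup M] [Module F M] (a b : M) :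
    finrank F (Submodule.span F ({a, b} : Set M)) ≤ 2 := by
  classical
  have h := finrank_span_le_card (R := F) ({a, b} : Set M)
  refine h.trans ?_
  rw [Set.toFinset_insert, Set.toFinset_singleton]
  exact (Finset.card_insert_le _ _).trans (by simp)

lemma finrank_span_pair_eq {M : Type*} [AddCommGroup M] [Module F M] {a b : M}
    (h : ∀ s t : F, s • a + t • b = 0 → s = 0 ∧ t = 0) :
    finrank F (Submodule.span F ({a, b} : Set M)) = 2 := by
  have li : LinearIndependent F ![a, b] := LinearIndependent.pair_iff.mpr h
  have := finrank_span_eq_card li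
  rwa [range_pair, Fintype.card_fin] at this

/-- three elements of a submodule of `finrank ≤ 2` admit a nontrivial relation -/
lemma three_dep {M : Type*} [AddCommGroup M] [Module F M] {S : Submodule F M}
    [FiniteDimensional F ↥S] (hS : finrank F ↥S ≤ 2) {x y w : M}
    (hx : x ∈ S) (hy : y ∈ S) (hw : w ∈ S) :
    ∃ s1 s2 s3 : F, ¬(s1 = 0 ∧ s2 = 0 ∧ s3 = 0) ∧ s1 • x + s2 • y + s3 • w = 0 := by
  by_contra hcon
  push_neg at hcon
  have li : LinearIndependent F (![⟨x, hx⟩, ⟨y, hy⟩, ⟨w, hw⟩] : Fin 3 → ↥S) := by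
    rw [Fintype.linearIndependent_iff]
    intro g hg
    have hg' : g 0 • x + g 1 • y + g 2 • w = 0 := by
      have := congrArg (Subtype.val) hg
      rw [Fin.sum_univ_three] at this
      simpa [add_assoc] using this
    have h3 := hcon (g 0) (g 1) (g 2)
    by_cases h0 : g 0 = 0 ∧ g 1 = 0 ∧ g 2 = 0
    · intro i; fin_cases i <;> [exact h0.1; exact h0.2.1; exact h0.2.2]
    · exact absurd hg' (h3 (fun ha hb hc => h0 ⟨ha, hb, hc⟩))
  have := li.fintype_card_le_finrank
  simp at this
  omega

lemma le_span_singleton_of_finrank_le_one {M : Type*} [AddCommGroup M] [Module F M]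
    {S : Submodule F M} [FiniteDimensional F ↥S] (h : finrank F ↥S ≤ 1) :
    ∃ γ : M, S ≤ Submodule.span F {γ} := by
  have h1 : Module.rank F ↥S ≤ 1 := by
    rw [← Module.finrank_eq_rank]
    exact_mod_cast h
  obtain ⟨γ, hγ⟩ := (Submodule.rank_le_one_iff_isPrincipal S).mp h1
  exact ⟨γ, le_of_eq hγ⟩


/-- dual functionals for a linearly independent family -/
lemma exists_dual {m : ℕ} {e : Fin m → Fin 5 → F} (he : LinearIndependent F e) :
    ∃ G : Fin m → Fin 5 → F, ∀ j k, (∑ i, G k i * e j i) = if k = j then 1 else 0 := by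
  classical
  let f : (Fin m → F) →ₗ[F] (Fin 5 → F) := Fintype.linearCombination F e
  have hker : LinearMap.ker f = ⊥ := by
    rw [LinearMap.ker_eq_bot']
    intro x hx
    have hx' : ∑ i, x i • e i = 0 := by
      simpa [f, Fintype.linearCombination_apply] using hx
    funext i
    exact Fintype.linearIndependent_iff.mp he x hx' i
  obtain ⟨g, hg⟩ := f.exists_leftInverse_of_injective hker
  refine ⟨fun k i => g (Pi.single i 1) k, fun j k => ?_⟩
  have hfe : f (Pi.single j 1) = e j := by
    simp [f, Fintype.linearCombination_apply, Pi.single_apply, ite_smul]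
  have hge : g (e j) = Pi.single j 1 := by
    rw [← hfe]
    exact LinearMap.congr_fun hg (Pi.single j 1)
  have hsum : (e j : Fin 5 → F) = ∑ i, e j i • (Pi.single i (1:F) : Fin 5 → F) := by
    funext l
    rw [Finset.sum_apply]
    simp only [Pi.smul_apply, Pi.single_apply, smul_eq_mul, mul_ite, mul_one, mul_zero]
    rw [Finset.sum_ite_eq]
    simp
  have hexp : g (e j) = ∑ i, e j i • g (Pi.single i 1) := by
    conv_lhs => rw [hsum]
    rw [map_sum]
    simp
  have h2 := congrFun (hge.symm.trans hexp) k
  rw [Finset.sum_apply] at h2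
  show ∑ i, g (Pi.single i 1) k * e j i = if k = j then 1 else 0
  rw [← Pi.single_apply j (1:F) k, h2]
  exact Finset.sum_congr rfl (fun i _ => by simp [mul_comm])

lemma coord_mem {m : ℕ} {e : Fin m → Fin 5 → F} (he : LinearIndependent F e)
    (c : Fin m → K) (S : Submodule F K)
    (hS : ∀ i, (∑ j, c j • phi F (e j) : Fin 5 → K) i ∈ S) : ∀ k, c k ∈ S := by
  classical
  obtain ⟨G, hG⟩ := exists_dual he
  intro k
  have hzi : ∀ i, (∑ j, c j • phi F (e j) : Fin 5 → K) i
      = ∑ j, c j * algebraMap F K (e j i) := by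
    intro i; simp [Finset.sum_apply]
  have key : c k = ∑ i, G k i • (∑ j, c j • phi F (e j) : Fin 5 → K) i := by
    calc c k = ∑ j, c j * algebraMap F K (if k = j then 1 else 0) := by
          rw [Finset.sum_congr rfl (fun j _ => by rw [apply_ite (algebraMap F K), map_one, map_zero, mul_ite, mul_one, mul_zero])]
          rw [Finset.sum_ite_eq]
          simp
      _ = ∑ j, c j * algebraMap F K (∑ i, G k i * e j i) := by
          simp_rw [hG]
      _ = ∑ j, ∑ i, c j * (algebraMap F K (G k i) * algebraMap F K (e j i)) := by
          simp [map_sum, Finset.mul_sum, map_mul]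
      _ = ∑ i, ∑ j, algebraMap F K (G k i) * (c j * algebraMap F K (e j i)) := by
          rw [Finset.sum_comm]
          exact Finset.sum_congr rfl (fun i _ => Finset.sum_congr rfl (fun j _ => by ring))
      _ = ∑ i, G k i • (∑ j, c j • phi F (e j) : Fin 5 → K) i := by
          refine Finset.sum_congr rfl (fun i _ => ?_)
          rw [hzi i, Algebra.smul_def, Finset.mul_sum]
  rw [key]
  exact Submodule.sum_mem _ (fun i _ => Submodule.smul_mem _ _ (hS i))




lemma mem_span_of_low2 {z : Fin 5 → K} (h : low2 F z) :
    ∃ α β : K, ∀ i, z i ∈ Submodule.span F ({α, β} : Set K) := by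
  obtain ⟨α, β, u, v, rfl⟩ := h
  refine ⟨α, β, fun i => Submodule.mem_span_pair.mpr ⟨u i, v i, ?_⟩⟩
  simp [Algebra.smul_def]
  ring

lemma low2_of_mem_span {z : Fin 5 → K} {α β : K}
    (h : ∀ i, z i ∈ Submodule.span F ({α, β} : Set K)) : low2 F z := by
  choose u v huv using (fun i => Submodule.mem_span_pair.mp (h i))
  refine ⟨α, β, u, v, funext fun i => ?_⟩
  have := huv i
  simp only [Algebra.smul_def] at this
  simp [Algebra.smul_def]
  linear_combination -this

lemma low1_of_mem_span {z : Fin 5 → K} {γ : K}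
    (h : ∀ i, z i ∈ Submodule.span F ({γ} : Set K)) : low1 F z := by
  choose w hw using (fun i => Submodule.mem_span_singleton.mp (h i))
  refine ⟨γ, w, funext fun i => ?_⟩
  have := hw i
  simp only [Algebra.smul_def] at this
  simp [Algebra.smul_def]
  linear_combination -this

lemma low2_of_rel3_aux {z : Fin 5 → K} {c1 c2 c3 : K} {f1 f2 f3 : Fin 5 → F}
    (hz : z = c1 • phi F f1 + c2 • phi F f2 + c3 • phi F f3) {s1 s2 s3 : F} (hs3 : s3 ≠ 0)
    (hrel : s1 • c1 + s2 • c2 + s3 • c3 = 0) : low2 F z := by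
  have hs3' : algebraMap F K s3 ≠ 0 := amap_ne_zero hs3
  have hc3 : c3 = algebraMap F K (-(s1/s3)) * c1 + algebraMap F K (-(s2/s3)) * c2 := by
    simp only [Algebra.smul_def] at hrel
    rw [map_neg, map_div₀, map_neg, map_div₀]
    field_simp
    linear_combination hrel
  refine ⟨c1, c2, f1 + (-(s1/s3)) • f3, f2 + (-(s2/s3)) • f3, ?_⟩
  rw [hz, hc3]
  funext i
  simp only [phi_apply, Pi.add_apply, Pi.smul_apply, smul_eq_mul]
  simp only [phi_apply, Pi.add_apply, Pi.smul_apply, smul_eq_mul, Algebra.smul_def, map_add,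
    map_neg, map_div₀, Pi.neg_apply, map_mul]
  field_simp
  ring

lemma low2_of_rel3 {z : Fin 5 → K} {c1 c2 c3 : K} {f1 f2 f3 : Fin 5 → F}
    (hz : z = c1 • phi F f1 + c2 • phi F f2 + c3 • phi F f3) {s1 s2 s3 : F}
    (hs : ¬(s1 = 0 ∧ s2 = 0 ∧ s3 = 0))
    (hrel : s1 • c1 + s2 • c2 + s3 • c3 = 0) : low2 F z := by
  by_cases h3 : s3 = 0
  · by_cases h2 : s2 = 0
    · have h1 : s1 ≠ 0 := fun h1 => hs ⟨h1, h2, h3⟩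
      refine low2_of_rel3_aux (c1 := c2) (c2 := c3) (c3 := c1) (f1 := f2) (f2 := f3) (f3 := f1)
        (s1 := s2) (s2 := s3) ?_ h1 ?_
      · rw [hz]; abel
      · rw [← hrel]; ring
    · refine low2_of_rel3_aux (c1 := c1) (c2 := c3) (c3 := c2) (f1 := f1) (f2 := f3) (f3 := f2)
        (s1 := s1) (s2 := s3) ?_ h2 ?_
      · rw [hz]; abel
      · rw [← hrel]; ring
  · exact low2_of_rel3_aux hz h3 hrel

/-- An element multiplicatively stabilizing a 2-dimensional `F`-subspace of `K`,
`[K:F] = 5`, lies in `F`. -/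
lemma stab_mem_range [Fintype F] (hK : finrank F K = 5) {B : Submodule F K}
    (hB : finrank F ↥B = 2) {s : K} (hs : ∀ b ∈ B, s * b ∈ B) :
    s ∈ Set.range (algebraMap F K) := by
  haveI : FiniteDimensional F K := FiniteDimensional.of_finrank_pos (by omega)
  -- B has a nonzero element
  have hBne : ∃ b0 ∈ B, b0 ≠ (0:K) := by
    by_contra hcon
    push_neg at hcon
    have : B = ⊥ := by
      rw [Submodule.eq_bot_iff]
      exact hcon
    rw [this] at hB
    simp [finrank_bot] at hB
  obtain ⟨b0, hb0B, hb0⟩ := hBne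
  -- the stabilizer submodule
  let S : Submodule F K :=
    { carrier := {x : K | ∀ b ∈ B, x * b ∈ B}
      add_mem' := fun {x y} hx hy b hb => by
        rw [add_mul]; exact Submodule.add_mem B (hx b hb) (hy b hb)
      zero_mem' := fun b hb => by rw [zero_mul]; exact Submodule.zero_mem B
      smul_mem' := fun a {x} hx b hb => by
        rw [smul_mul_assoc]
        exact Submodule.smul_mem B a (hx b hb) }
  have hmemS : ∀ x : K, x ∈ S ↔ ∀ b ∈ B, x * b ∈ B := fun x => Iff.rfl
  have h1S : (1:K) ∈ S := fun b hb => by rwa [one_mul]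
  have hsS : s ∈ S := hs
  have hs2S : s * s ∈ S := fun b hb => by rw [mul_assoc]; exact hs _ (hs b hb)
  -- S injects into B by right multiplication with b0
  have hSrank : finrank F ↥S ≤ 2 := by
    let ψ : ↥S →ₗ[F] K :=
      { toFun := fun x => x.val * b0
        map_add' := fun x y => by simp [add_mul]
        map_smul' := fun a x => by simp [smul_mul_assoc] }
    have hinj : Function.Injective ψ := by
      intro x y hxy
      exact Subtype.ext (mul_right_cancel₀ hb0 hxy)
    have hle : LinearMap.range ψ ≤ B := by
      rintro _ ⟨x, rfl⟩
      exact x.2 b0 hb0B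
    calc finrank F ↥S = finrank F ↥(LinearMap.range ψ) :=
          (LinearMap.finrank_range_of_inj hinj).symm
      _ ≤ finrank F ↥B := Submodule.finrank_mono hle
      _ = 2 := hB
  -- 1, s, s^2 are dependent
  obtain ⟨x, y, w, hxyz, hrel⟩ := three_dep hSrank h1S hsS hs2S
  have hint : IsIntegral F s := IsIntegral.of_finite F s
  by_cases hw : w = 0
  · subst hw
    by_cases hy' : y = 0
    · exfalso
      subst hy'
      have hx0 : x ≠ 0 := fun h => hxyz ⟨h, rfl, rfl⟩
      apply hx0
      have : algebraMap F K x = 0 := by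
        have := hrel
        simpa [Algebra.smul_def] using this
      exact (algebraMap F K).injective (by simpa using this)
    · refine ⟨-(x/y), ?_⟩
      have : algebraMap F K x + algebraMap F K y * s = 0 := by
        have := hrel
        simpa [Algebra.smul_def] using this
      have hy'' : algebraMap F K y ≠ 0 := amap_ne_zero hy'
      rw [map_neg, map_div₀]
      field_simp
      linear_combination -this
  · -- quadratic relation; minpoly degree considerations
    have hw' : algebraMap F K w ≠ 0 := amap_ne_zero hw
    set p : Polynomial F :=
      Polynomial.C w * Polynomial.X ^ 2 + Polynomial.C y * Polynomial.X + Polynomial.C x with hp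
    have hpdeg : p.natDegree = 2 := Polynomial.natDegree_quadratic hw
    have hpne : p ≠ 0 := fun h => by simp [h] at hpdeg
    have hpeval : Polynomial.aeval s p = 0 := by
      simp only [hp, map_add, map_mul, Polynomial.aeval_C, Polynomial.aeval_X, map_pow]
      have := hrel
      simp only [Algebra.smul_def] at this
      linear_combination this
    have hdvd : minpoly F s ∣ p := minpoly.dvd F s hpeval
    have hdeg2 : (minpoly F s).natDegree ≤ 2 := by
      have := Polynomial.natDegree_le_of_dvd hdvd hpne
      omega
    have hdegdvd : (minpoly F s).natDegree ∣ 5 := by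
      rw [← hK]
      exact minpoly.degree_dvd hint
    have hdegpos : 0 < (minpoly F s).natDegree := minpoly.natDegree_pos hint
    have hdeg1 : (minpoly F s).natDegree = 1 := by
      rcases (Nat.prime_five).eq_one_or_self_of_dvd _ hdegdvd with h | h
      · exact h
      · omega
    have := (minpoly.natDegree_eq_one_iff).mp hdeg1
    obtain ⟨a, ha⟩ := this
    exact ⟨a, ha⟩



section CaseD1
variable [Fintype F] [FiniteDimensional F K]

/-- recovering a parameter from its relation vector up to scalar -/
lemma recov (x y : (F × F) ⊕ F) (lam : F)
    (h : Sum.elim (fun p : F × F => (![p.1, 1, p.2] : Fin 3 → F)) (fun a => ![a, 0, 1]) y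
       = lam • Sum.elim (fun p : F × F => (![p.1, 1, p.2] : Fin 3 → F)) (fun a => ![a, 0, 1]) x) :
    x = y := by
  rcases x with ⟨a, g⟩ | a <;> rcases y with ⟨a', g'⟩ | a'
  · have h1 := congrFun h 1
    have h0 := congrFun h 0
    have h2 := congrFun h 2
    simp only [Sum.elim_inl, Pi.smul_apply, Matrix.cons_val_one, Matrix.cons_val_zero,
      Matrix.cons_val_two, Matrix.tail_cons, Matrix.head_cons, smul_eq_mul, mul_one] at h0 h1 h2
    rw [← h1, one_mul] at h0 h2
    simp [h0, h2]
  · exfalso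
    have h1 := congrFun h 1
    have h2 := congrFun h 2
    simp only [Sum.elim_inl, Sum.elim_inr, Pi.smul_apply, Matrix.cons_val_one, Matrix.cons_val_zero,
      Matrix.cons_val_two, Matrix.tail_cons, Matrix.head_cons, smul_eq_mul, mul_one] at h1 h2
    rw [← h1] at h2
    simp at h2
  · exfalso
    have h1 := congrFun h 1
    simp only [Sum.elim_inl, Sum.elim_inr, Pi.smul_apply, Matrix.cons_val_one, Matrix.cons_val_zero,
      Matrix.head_cons, smul_eq_mul, mul_zero] at h1
    exact one_ne_zero h1
  · have h2 := congrFun h 2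
    have h0 := congrFun h 0
    simp only [Sum.elim_inr, Pi.smul_apply, Matrix.cons_val_two, Matrix.cons_val_zero,
      Matrix.tail_cons, Matrix.head_cons, smul_eq_mul, mul_one] at h0 h2
    rw [← h2, one_mul] at h0
    simp [h0]

/-- The case where the two planes meet: exactly `q^2+q` parameters. -/
lemma case_d1 (z1 z2 : Fin 5 → K) (e1 e2 e3 : Fin 5 → F) (a1 a2 b2 b3 : K)
    (he : LinearIndependent F ![e1, e2, e3])
    (hz1 : z1 = a1 • phi F e1 + a2 • phi F e2)
    (hz2 : z2 = b2 • phi F e2 + b3 • phi F e3)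
    (ha : ∀ s t : F, s • a1 + t • a2 = 0 → s = 0 ∧ t = 0)
    (hb : ∀ s t : F, s • b2 + t • b3 = 0 → s = 0 ∧ t = 0)
    (hno1 : ∀ s t : K, ¬(s = 0 ∧ t = 0) → ¬ low1 F (s • z1 + t • z2)) :
    {t : K | low2 F (z1 + t • z2)}.ncard = Fintype.card F ^ 2 + Fintype.card F := by
  classical
  have ha1 : a1 ≠ 0 := fun h => one_ne_zero ((ha 1 0 (by simp [h])).1)
  have hb2 : b2 ≠ 0 := fun h => one_ne_zero ((hb 1 0 (by simp [h])).1)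
  have hb3 : b3 ≠ 0 := fun h => one_ne_zero ((hb 0 1 (by simp [h])).2)
  have hden : ∀ g : F, b2 + g • b3 ≠ 0 := fun g h => one_ne_zero ((hb 1 g (by
    rw [← h]; simp)).1)
  have key : ∀ t : K, z1 + t • z2
      = a1 • phi F e1 + (a2 + t * b2) • phi F e2 + (t * b3) • phi F e3 := by
    intro t
    rw [hz1, hz2]
    funext i
    simp only [Pi.add_apply, Pi.smul_apply, smul_eq_mul, phi_apply]
    ring
  have keysum : ∀ t : K, z1 + t • z2
      = ∑ j, (![a1, a2 + t * b2, t * b3]) j • phi F (![e1, e2, e3] j) := by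
    intro t
    rw [key t, Fin.sum_univ_three]
    simp
  -- the parametrizing map
  set τ : (F × F) ⊕ F → K :=
    Sum.elim (fun p => -((p.1 • a1 + a2) / (b2 + p.2 • b3))) (fun a => -((a • a1) / b3))
    with hτ
  have hrelInl : ∀ a g : F,
      a • a1 + (1:F) • (a2 + τ (Sum.inl (a, g)) * b2) + g • (τ (Sum.inl (a, g)) * b3) = 0 := by
    intro a g
    have hd := hden g
    simp only [hτ, Sum.elim_inl, Algebra.smul_def, map_one, one_mul]
    simp only [Algebra.smul_def] at hd
    field_simp
    ring
  have hrelInr : ∀ a : F,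
      a • a1 + (0:F) • (a2 + τ (Sum.inr a) * b2) + (1:F) • (τ (Sum.inr a) * b3) = 0 := by
    intro a
    simp only [hτ, Sum.elim_inr, Algebra.smul_def, map_one, one_mul, map_zero, zero_mul,
      add_zero, zero_add]
    field_simp
    ring
  -- range τ ⊆ T
  have hsub1 : Set.range τ ⊆ {t : K | low2 F (z1 + t • z2)} := by
    rintro _ ⟨(⟨a, g⟩ | a), rfl⟩
    · exact low2_of_rel3 (key _) (s1 := a) (s2 := 1) (s3 := g) (by simp) (hrelInl a g)
    · exact low2_of_rel3 (key _) (s1 := a) (s2 := 0) (s3 := 1) (by simp) (hrelInr a)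
  -- T ⊆ range τ
  have hsub2 : {t : K | low2 F (z1 + t • z2)} ⊆ Set.range τ := by
    intro t ht
    obtain ⟨α, β, hmem⟩ := mem_span_of_low2 ht
    have hc : ∀ k, (![a1, a2 + t * b2, t * b3]) k ∈ Submodule.span F ({α, β} : Set K) := by
      refine coord_mem he _ _ (fun i => ?_)
      rw [← keysum t]
      exact hmem i
    have h0 := hc 0; have h1 := hc 1; have h2 := hc 2
    simp only [Matrix.cons_val_zero, Matrix.cons_val_one, Matrix.head_cons,
      Matrix.cons_val_two, Matrix.tail_cons] at h0 h1 h2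
    obtain ⟨s1, s2, s3, hsne, hrel⟩ := three_dep (finrank_span_pair_le α β) h0 h1 h2
    have hs23 : ¬(s2 = 0 ∧ s3 = 0) := by
      rintro ⟨rfl, rfl⟩
      simp only [zero_smul, add_zero] at hrel
      exact hsne ⟨(ha s1 0 (by simpa using hrel)).1, rfl, rfl⟩
    by_cases h2' : s2 = 0
    · have hs3 : s3 ≠ 0 := fun h => hs23 ⟨h2', h⟩
      refine ⟨Sum.inr (s1 / s3), ?_⟩
      simp only [hτ, Sum.elim_inr]
      subst h2'
      simp only [Algebra.smul_def, map_zero, zero_mul, add_zero, map_div₀] at hrel ⊢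
      have hs3' : algebraMap F K s3 ≠ 0 := amap_ne_zero hs3
      field_simp
      linear_combination -hrel
    · refine ⟨Sum.inl (s1 / s2, s3 / s2), ?_⟩
      simp only [hτ, Sum.elim_inl]
      have hs2' : algebraMap F K s2 ≠ 0 := amap_ne_zero h2'
      have hd := hden (s3 / s2)
      simp only [Algebra.smul_def, map_div₀] at hrel hd ⊢
      rw [← neg_div, div_eq_iff hd]
      field_simp
      linear_combination -hrel
  -- injectivity of τ
  have hστ : ∀ x : (F × F) ⊕ F, ∃ σ : Fin 3 → F, σ ≠ 0 ∧
      (Sum.elim (fun p => (![p.1, 1, p.2] : Fin 3 → F)) (fun a => ![a, 0, 1]) x = σ) ∧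
      σ 0 • a1 + σ 1 • (a2 + τ x * b2) + σ 2 • (τ x * b3) = 0 := by
    rintro (⟨a, g⟩ | a)
    · refine ⟨![a, 1, g], ?_, rfl, ?_⟩
      · intro h
        have := congrFun h 1
        simp at this
      · simpa using hrelInl a g
    · refine ⟨![a, 0, 1], ?_, rfl, ?_⟩
      · intro h
        have := congrFun h 2
        simp at this
      · simpa using hrelInr a
  have hinj : Function.Injective τ := by
    intro x y hxy
    set t := τ x with htdef
    have htT : low2 F (z1 + t • z2) := hsub1 ⟨x, rfl⟩
    set c : Fin 3 → K := ![a1, a2 + t * b2, t * b3] with hcdef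
    -- rank of the coefficient span is 2
    have hrk : finrank F (Submodule.span F (Set.range c)) = 2 := by
      obtain ⟨α, β, hmem⟩ := mem_span_of_low2 htT
      have hck : ∀ k, c k ∈ Submodule.span F ({α, β} : Set K) := by
        refine coord_mem he _ _ (fun i => ?_)
        rw [← keysum t]
        exact hmem i
      have hle2 : finrank F (Submodule.span F (Set.range c)) ≤ 2 := by
        refine le_trans (Submodule.finrank_mono ?_) (finrank_span_pair_le α β)
        rw [Submodule.span_le]
        rintro _ ⟨k, rfl⟩
        exact hck k
      have hge2 : ¬ finrank F (Submodule.span F (Set.range c)) ≤ 1 := by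
        intro hle1
        obtain ⟨γ, hγ⟩ := le_span_singleton_of_finrank_le_one hle1
        apply hno1 1 t (by simp)
        rw [one_smul]
        refine low1_of_mem_span (γ := γ) (fun i => ?_)
        apply hγ
        rw [keysum t]
        have : (∑ j, (![a1, a2 + t * b2, t * b3]) j • phi F (![e1, e2, e3] j) : Fin 5 → K) i
            = ∑ j, (![e1, e2, e3] j i) • c j := by
          rw [Finset.sum_apply]
          refine Finset.sum_congr rfl (fun j _ => ?_)
          simp only [Pi.smul_apply, smul_eq_mul, phi_apply, Algebra.smul_def, hcdef]
          ring
        rw [this]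
        exact Submodule.sum_mem _ (fun j _ =>
          Submodule.smul_mem _ _ (Submodule.subset_span ⟨j, rfl⟩))
      omega
    -- kernel of the relation map is 1-dimensional
    set L : (Fin 3 → F) →ₗ[F] K := Fintype.linearCombination F c with hLdef
    have hLapp : ∀ σ : Fin 3 → F, L σ = σ 0 • c 0 + σ 1 • c 1 + σ 2 • c 2 := by
      intro σ
      rw [hLdef, Fintype.linearCombination_apply, Fin.sum_univ_three]
    have hLker : finrank F (LinearMap.ker L) = 1 := by
      have hrn := LinearMap.finrank_range_add_finrank_ker L
      rw [Fintype.range_linearCombination, hrk, finrank_fin_fun] at hrn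
      omega
    obtain ⟨σx, hσxne, hσxeq, hσxrel⟩ := hστ x
    obtain ⟨σy, hσyne, hσyeq, hσyrel⟩ := hστ y
    have hxker : σx ∈ LinearMap.ker L := by
      rw [LinearMap.mem_ker, hLapp]
      simpa [hcdef] using hσxrel
    have hyker : σy ∈ LinearMap.ker L := by
      rw [LinearMap.mem_ker, hLapp]
      rw [← hxy] at hσyrel
      simpa [hcdef] using hσyrel
    have hker_eq : LinearMap.ker L = Submodule.span F {σx} := by
      refine (Submodule.eq_of_le_of_finrank_le ?_ ?_).symm
      · rw [Submodule.span_le, Set.singleton_subset_iff]; exact hxker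
      · rw [hLker, finrank_span_singleton hσxne]
    have hmem' : σy ∈ Submodule.span F ({σx} : Set (Fin 3 → F)) := hker_eq ▸ hyker
    obtain ⟨lam, hlam⟩ := Submodule.mem_span_singleton.mp hmem'
    -- case analysis to conclude x = y
    refine recov x y lam ?_
    rw [hσxeq, hσyeq]
    exact hlam.symm
  -- conclude the count
  have hTeq : {t : K | low2 F (z1 + t • z2)} = Set.range τ :=
    Set.Subset.antisymm hsub2 hsub1
  rw [hTeq, ← Set.image_univ, Set.ncard_image_of_injective _ hinj, Set.ncard_univ,
    Nat.card_sum, Nat.card_prod, Nat.card_eq_fintype_card]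
  ring

/-- The case where the two planes are disjoint: `1` or `q` parameters. -/
lemma case_d0 (hK : finrank F K = 5) (z1 z2 : Fin 5 → K) (u1 v1 u2 v2 : Fin 5 → F)
    (α1 β1 α2 β2 : K)
    (he : LinearIndependent F ![u1, v1, u2, v2])
    (hz1 : z1 = α1 • phi F u1 + β1 • phi F v1)
    (hz2 : z2 = α2 • phi F u2 + β2 • phi F v2)
    (hc1 : ∀ s t : F, s • α1 + t • β1 = 0 → s = 0 ∧ t = 0)
    (hc2 : ∀ s t : F, s • α2 + t • β2 = 0 → s = 0 ∧ t = 0) :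
    {t : K | low2 F (z1 + t • z2)}.ncard = 1 ∨
      {t : K | low2 F (z1 + t • z2)}.ncard = Fintype.card F := by
  classical
  haveI : Finite K := Module.finite_of_finite F
  set A : Submodule F K := Submodule.span F ({α1, β1} : Set K) with hA
  have frA : finrank F ↥A = 2 := finrank_span_pair_eq hc1
  have keysum : ∀ t : K, z1 + t • z2
      = ∑ j, (![α1, β1, t * α2, t * β2]) j • phi F (![u1, v1, u2, v2] j) := by
    intro t
    rw [hz1, hz2, Fin.sum_univ_four]
    funext i
    simp only [Pi.add_apply, Pi.smul_apply, smul_eq_mul, phi_apply, Matrix.cons_val_zero,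
      Matrix.cons_val_one, Matrix.head_cons, Matrix.cons_val_two, Matrix.tail_cons,
      Matrix.cons_val_three]
    ring
  set T' : Set K := {t : K | t ≠ 0 ∧ t * α2 ∈ A ∧ t * β2 ∈ A} with hT'
  have hTeq : {t : K | low2 F (z1 + t • z2)} = insert 0 T' := by
    ext t
    simp only [Set.mem_setOf_eq, Set.mem_insert_iff]
    constructor
    · intro hlow
      by_cases ht0 : t = 0
      · exact Or.inl ht0
      · refine Or.inr ⟨ht0, ?_, ?_⟩
        · obtain ⟨α, β, hmem⟩ := mem_span_of_low2 hlow
          have hck : ∀ k, (![α1, β1, t * α2, t * β2]) k ∈ Submodule.span F ({α, β} : Set K) := by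
            refine coord_mem he _ _ (fun i => ?_)
            rw [← keysum t]
            exact hmem i
          have hAS : A = Submodule.span F ({α, β} : Set K) := by
            refine Submodule.eq_of_le_of_finrank_le ?_ ?_
            · rw [hA, Submodule.span_le]
              rintro x (rfl | rfl)
              · simpa using hck 0
              · simpa using hck 1
            · rw [frA]; exact finrank_span_pair_le α β
          rw [hAS]
          simpa using hck 2
        · obtain ⟨α, β, hmem⟩ := mem_span_of_low2 hlow
          have hck : ∀ k, (![α1, β1, t * α2, t * β2]) k ∈ Submodule.span F ({α, β} : Set K) := by
            refine coord_mem he _ _ (fun i => ?_)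
            rw [← keysum t]
            exact hmem i
          have hAS : A = Submodule.span F ({α, β} : Set K) := by
            refine Submodule.eq_of_le_of_finrank_le ?_ ?_
            · rw [hA, Submodule.span_le]
              rintro x (rfl | rfl)
              · simpa using hck 0
              · simpa using hck 1
            · rw [frA]; exact finrank_span_pair_le α β
          rw [hAS]
          simpa using hck 3
    · rintro (rfl | ⟨ht0, h2, h3⟩)
      · rw [zero_smul, add_zero]
        exact ⟨α1, β1, u1, v1, hz1⟩
      · obtain ⟨x, y, hxy⟩ := Submodule.mem_span_pair.mp h2
        obtain ⟨x', y', hxy'⟩ := Submodule.mem_span_pair.mp h3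
        refine ⟨α1, β1, u1 + x • u2 + x' • v2, v1 + y • u2 + y' • v2, ?_⟩
        funext i
        simp only [Algebra.smul_def] at hxy hxy'
        rw [hz1, hz2]
        simp only [Pi.add_apply, Pi.smul_apply, smul_eq_mul, phi_apply, map_add, map_mul]
        linear_combination -(algebraMap F K (u2 i)) * hxy - (algebraMap F K (v2 i)) * hxy'
  by_cases hE : ∃ t0, t0 ∈ T'
  · obtain ⟨t0, ht0⟩ := hE
    have ht0ne : t0 ≠ 0 := ht0.1
    -- the span equals A for every member
    have hA2 : ∀ t ∈ T', Submodule.span F ({t * α2, t * β2} : Set K) = A := by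
      intro t ht
      refine Submodule.eq_of_le_of_finrank_le ?_ ?_
      · rw [Submodule.span_le]
        rintro x (rfl | rfl)
        · exact ht.2.1
        · exact ht.2.2
      · rw [frA]
        have hpair : ∀ s r : F, s • (t * α2) + r • (t * β2) = 0 → s = 0 ∧ r = 0 := by
          intro s r h
          refine hc2 s r ?_
          have h' : t * (s • α2 + r • β2) = 0 := by
            simp only [Algebra.smul_def] at h ⊢
            linear_combination h
          rcases mul_eq_zero.mp h' with h'' | h''
          · exact absurd h'' ht.1
          · exact h''
        exact le_of_eq (finrank_span_pair_eq hpair).symm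
    set B : Submodule F K := Submodule.span F ({α2, β2} : Set K) with hB
    have frB : finrank F ↥B = 2 := finrank_span_pair_eq hc2
    have hT'img : T' = (fun x : F => algebraMap F K x * t0) '' {x : F | x ≠ 0} := by
      ext t
      constructor
      · intro ht
        have htne : t ≠ 0 := ht.1
        set s : K := t * t0⁻¹ with hs
        have hsα : s * α2 ∈ B ∧ s * β2 ∈ B := by
          constructor
          · have : t * α2 ∈ Submodule.span F ({t0 * α2, t0 * β2} : Set K) := by
              rw [hA2 t0 ht0]; exact ht.2.1
            obtain ⟨cc, dd, hcd⟩ := Submodule.mem_span_pair.mp this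
            refine Submodule.mem_span_pair.mpr ⟨cc, dd, ?_⟩
            simp only [Algebra.smul_def] at hcd ⊢
            rw [hs]
            field_simp
            linear_combination hcd
          · have : t * β2 ∈ Submodule.span F ({t0 * α2, t0 * β2} : Set K) := by
              rw [hA2 t0 ht0]; exact ht.2.2
            obtain ⟨cc, dd, hcd⟩ := Submodule.mem_span_pair.mp this
            refine Submodule.mem_span_pair.mpr ⟨cc, dd, ?_⟩
            simp only [Algebra.smul_def] at hcd ⊢
            rw [hs]
            field_simp
            linear_combination hcd
        have hsB : ∀ b ∈ B, s * b ∈ B := by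
          intro b hb
          obtain ⟨ee, ff, hef⟩ := Submodule.mem_span_pair.mp hb
          have : s * b = ee • (s * α2) + ff • (s * β2) := by
            rw [← hef]
            simp only [Algebra.smul_def]
            ring
          rw [this]
          exact Submodule.add_mem _ (Submodule.smul_mem _ _ hsα.1) (Submodule.smul_mem _ _ hsα.2)
        obtain ⟨x, hx⟩ := stab_mem_range hK frB hsB
        have hxne : x ≠ 0 := by
          intro h
          rw [h, map_zero] at hx
          have : s ≠ 0 := mul_ne_zero htne (inv_ne_zero ht0ne)
          exact this hx.symm
        refine ⟨x, hxne, ?_⟩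
        show algebraMap F K x * t0 = t
        rw [hx, hs]
        field_simp
      · rintro ⟨x, hx, rfl⟩
        refine ⟨mul_ne_zero (amap_ne_zero hx) ht0ne, ?_, ?_⟩
        · have : algebraMap F K x * t0 * α2 = x • (t0 * α2) := by
            simp [Algebra.smul_def]; ring
          rw [this]
          exact Submodule.smul_mem _ _ ht0.2.1
        · have : algebraMap F K x * t0 * β2 = x • (t0 * β2) := by
            simp [Algebra.smul_def]; ring
          rw [this]
          exact Submodule.smul_mem _ _ ht0.2.2
    right
    have hinj : Function.Injective (fun x : F => algebraMap F K x * t0) := by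
      intro x y hxy
      exact (algebraMap F K).injective (mul_right_cancel₀ ht0ne hxy)
    have h0T : (0:K) ∉ T' := fun h => h.1 rfl
    rw [hTeq, Set.ncard_insert_of_notMem h0T (Set.toFinite _), hT'img,
      Set.ncard_image_of_injective _ hinj]
    have : {x : F | x ≠ 0} = Set.univ \ {0} := by
      ext x; simp
    rw [this, Set.ncard_diff (by simp), Set.ncard_univ, Set.ncard_singleton,
      Nat.card_eq_fintype_card]
    have hpos : 0 < Fintype.card F := Fintype.card_pos
    omega
  · left
    have : T' = ∅ := Set.eq_empty_iff_forall_notMem.mpr (fun t ht => hE ⟨t, ht⟩)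
    rw [hTeq, this]
    simp


lemma phi_mem_spanK {x a b : Fin 5 → F} (h : x ∈ Submodule.span F {a, b}) :
    (phi F x : Fin 5 → K) ∈ Submodule.span K {phi F a, phi F b} := by
  obtain ⟨s, t, hst⟩ := Submodule.mem_span_pair.mp h
  refine Submodule.mem_span_pair.mpr ⟨algebraMap F K s, algebraMap F K t, ?_⟩
  rw [← hst]
  funext i
  simp only [Pi.add_apply, Pi.smul_apply, smul_eq_mul, phi_apply, map_add, map_mul]

lemma main_count [Fintype F] (hK : finrank F K = 5) (z1 z2 : Fin 5 → K)
    (hind : ∀ s t : K, s • z1 + t • z2 = 0 → s = 0 ∧ t = 0)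
    (hno1 : ∀ s t : K, ¬(s = 0 ∧ t = 0) → ¬ low1 F (s • z1 + t • z2))
    (hl1 : low2 F z1) (hl2 : low2 F z2) :
    {t : K | low2 F (z1 + t • z2)}.ncard = 1 ∨
      {t : K | low2 F (z1 + t • z2)}.ncard = Fintype.card F ∨
      {t : K | low2 F (z1 + t • z2)}.ncard = Fintype.card F ^ 2 + Fintype.card F := by
  classical
  haveI : FiniteDimensional F K := FiniteDimensional.of_finrank_pos (by rw [hK]; omega)
  have h1 : ¬ low1 F z1 := by have := hno1 1 0 (by simp); simpa using this
  have h2 : ¬ low1 F z2 := by have := hno1 0 1 (by simp); simpa using this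
  obtain ⟨α1, β1, u1, v1, hz1⟩ := hl1
  obtain ⟨α2, β2, u2, v2, hz2⟩ := hl2
  have hc1 := coeff_indep h1 hz1
  have hc2 := coeff_indep h2 hz2
  have hv1 := vec_indep h1 hz1
  have hv2 := vec_indep h2 hz2
  set U1 : Submodule F (Fin 5 → F) := Submodule.span F {u1, v1} with hU1
  set U2 : Submodule F (Fin 5 → F) := Submodule.span F {u2, v2} with hU2
  have hu1U1 : u1 ∈ U1 := Submodule.subset_span (Set.mem_insert _ _)
  have hv1U1 : v1 ∈ U1 := Submodule.subset_span (Set.mem_insert_of_mem _ rfl)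
  have hu2U2 : u2 ∈ U2 := Submodule.subset_span (Set.mem_insert _ _)
  have hv2U2 : v2 ∈ U2 := Submodule.subset_span (Set.mem_insert_of_mem _ rfl)
  have frU1 : finrank F ↥U1 = 2 := finrank_span_pair_eq hv1
  have frU2 : finrank F ↥U2 = 2 := finrank_span_pair_eq hv2
  by_cases hcase : ∃ w : Fin 5 → F, w ≠ 0 ∧ w ∈ U1 ⊓ U2
  · -- the two planes meet : q^2 + q
    right; right
    obtain ⟨w, hw0, hwm⟩ := hcase
    have hw1 : w ∈ U1 := hwm.1
    have hw2 : w ∈ U2 := hwm.2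
    -- U2 is not contained in U1
    have hnle : ¬ U2 ≤ U1 := by
      intro hle
      set E : Submodule K (Fin 5 → K) := Submodule.span K {phi F u1, phi F v1} with hE
      have hphi : ∀ x : Fin 5 → F, x ∈ U1 → (phi F x : Fin 5 → K) ∈ E := by
        intro x hx
        exact phi_mem_spanK hx
      have hz1E : z1 ∈ E := by
        rw [hz1]
        exact Submodule.add_mem _ (Submodule.smul_mem _ _ (hphi u1 hu1U1))
          (Submodule.smul_mem _ _ (hphi v1 hv1U1))
      have hz2E : z2 ∈ E := by
        rw [hz2]
        exact Submodule.add_mem _ (Submodule.smul_mem _ _ (hphi u2 (hle hu2U2)))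
          (Submodule.smul_mem _ _ (hphi v2 (hle hv2U2)))
      have hspan : Submodule.span K {z1, z2} ≤ E := by
        rw [Submodule.span_le]
        rintro x (rfl | rfl) <;> assumption
      have hfr12 : finrank K ↥(Submodule.span K ({z1, z2} : Set (Fin 5 → K))) = 2 :=
        finrank_span_pair_eq hind
      have heq : Submodule.span K {z1, z2} = E := by
        refine Submodule.eq_of_le_of_finrank_le hspan ?_
        rw [hfr12]
        exact finrank_span_pair_le _ _
      have hu1E : (phi F u1 : Fin 5 → K) ∈ Submodule.span K ({z1, z2} : Set (Fin 5 → K)) := by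
        rw [heq]
        exact Submodule.subset_span (Set.mem_insert _ _)
      obtain ⟨a, b, hab⟩ := Submodule.mem_span_pair.mp hu1E
      have hu1ne : (phi F u1 : Fin 5 → K) ≠ 0 := by
        rw [Ne, phi_eq_zero_iff]
        intro h
        exact one_ne_zero (hv1 1 0 (by simp [h])).1
      have habne : ¬(a = 0 ∧ b = 0) := by
        rintro ⟨rfl, rfl⟩
        simp only [zero_smul, add_zero] at hab
        exact hu1ne hab.symm
      exact hno1 a b habne ⟨1, u1, by rw [hab, one_smul]⟩
    obtain ⟨e3, he3U2, he3nU1⟩ := SetLike.not_le_iff_exists.mp hnle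
    have hsw : ¬ U1 ≤ Submodule.span F {w} := by
      intro hle
      have := Submodule.finrank_mono hle
      rw [frU1, finrank_span_singleton hw0] at this
      omega
    obtain ⟨e1, he1U1, he1nw⟩ := SetLike.not_le_iff_exists.mp hsw
    have hpair1 : ∀ s t : F, s • e1 + t • w = 0 → s = 0 ∧ t = 0 := by
      intro s t h
      by_cases hs : s = 0
      · subst hs
        rw [zero_smul, zero_add] at h
        exact ⟨rfl, (smul_eq_zero.mp h).resolve_right hw0⟩
      · exfalso
        apply he1nw
        have he1w : e1 = (-(t/s)) • w := by
          have h5 : s • e1 = -(t • w) := eq_neg_of_add_eq_zero_left h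
          calc e1 = (s⁻¹ * s) • e1 := by rw [inv_mul_cancel₀ hs, one_smul]
          _ = s⁻¹ • (s • e1) := by rw [mul_smul]
          _ = s⁻¹ • (-(t • w)) := by rw [h5]
          _ = (-(t/s)) • w := by rw [smul_neg, smul_smul, ← neg_smul]; ring_nf
        rw [he1w]
        exact Submodule.smul_mem _ _ (Submodule.mem_span_singleton_self w)
    have hpair2 : ∀ s t : F, s • w + t • e3 = 0 → s = 0 ∧ t = 0 := by
      intro s t h
      by_cases ht : t = 0
      · subst ht
        rw [zero_smul, add_zero] at h
        exact ⟨(smul_eq_zero.mp h).resolve_right hw0, rfl⟩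
      · exfalso
        apply he3nU1
        have he3w : e3 = (-(s/t)) • w := by
          have h5 : t • e3 = -(s • w) := eq_neg_of_add_eq_zero_right h
          calc e3 = (t⁻¹ * t) • e3 := by rw [inv_mul_cancel₀ ht, one_smul]
          _ = t⁻¹ • (t • e3) := by rw [mul_smul]
          _ = t⁻¹ • (-(s • w)) := by rw [h5]
          _ = (-(s/t)) • w := by rw [smul_neg, smul_smul, ← neg_smul]; ring_nf
        rw [he3w]
        exact Submodule.smul_mem _ _ hw1
    have he : LinearIndependent F ![e1, w, e3] := by
      rw [Fintype.linearIndependent_iff]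
      intro g hg
      rw [Fin.sum_univ_three] at hg
      simp only [Matrix.cons_val_zero, Matrix.cons_val_one, Matrix.head_cons,
        Matrix.cons_val_two, Matrix.tail_cons] at hg
      have hg2 : g 2 = 0 := by
        by_contra hg2
        apply he3nU1
        have h5 : g 2 • e3 = -(g 0 • e1 + g 1 • w) := eq_neg_of_add_eq_zero_right hg
        have he3w : e3 = (-(g 0/g 2)) • e1 + (-(g 1/g 2)) • w := by
          calc e3 = ((g 2)⁻¹ * g 2) • e3 := by rw [inv_mul_cancel₀ hg2, one_smul]
          _ = (g 2)⁻¹ • (g 2 • e3) := by rw [mul_smul]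
          _ = (g 2)⁻¹ • (-(g 0 • e1 + g 1 • w)) := by rw [h5]
          _ = (-(g 0/g 2)) • e1 + (-(g 1/g 2)) • w := by
              rw [smul_neg, smul_add, smul_smul, smul_smul, neg_add, ← neg_smul, ← neg_smul]
              ring_nf
        rw [he3w]
        exact Submodule.add_mem _ (Submodule.smul_mem _ _ he1U1) (Submodule.smul_mem _ _ hw1)
      rw [hg2, zero_smul, add_zero] at hg
      obtain ⟨h0, h1⟩ := hpair1 _ _ hg
      intro i
      fin_cases i <;> simp [h0, h1, hg2]
    have hU1eq : Submodule.span F {e1, w} = U1 := by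
      refine Submodule.eq_of_le_of_finrank_le ?_ ?_
      · rw [Submodule.span_le]
        rintro x (rfl | rfl) <;> assumption
      · rw [frU1, finrank_span_pair_eq hpair1]
    have hU2eq : Submodule.span F {w, e3} = U2 := by
      refine Submodule.eq_of_le_of_finrank_le ?_ ?_
      · rw [Submodule.span_le]
        rintro x (rfl | rfl) <;> assumption
      · rw [frU2, finrank_span_pair_eq hpair2]
    have hz1mem : z1 ∈ Submodule.span K {phi F e1, phi F w} := by
      rw [hz1]
      exact Submodule.add_mem _
        (Submodule.smul_mem _ _ (phi_mem_spanK (hU1eq ▸ hu1U1)))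
        (Submodule.smul_mem _ _ (phi_mem_spanK (hU1eq ▸ hv1U1)))
    have hz2mem : z2 ∈ Submodule.span K {phi F w, phi F e3} := by
      rw [hz2]
      exact Submodule.add_mem _
        (Submodule.smul_mem _ _ (phi_mem_spanK (hU2eq ▸ hu2U2)))
        (Submodule.smul_mem _ _ (phi_mem_spanK (hU2eq ▸ hv2U2)))
    obtain ⟨a1, a2, hza⟩ := Submodule.mem_span_pair.mp hz1mem
    obtain ⟨b2, b3, hzb⟩ := Submodule.mem_span_pair.mp hz2mem
    exact case_d1 z1 z2 e1 w e3 a1 a2 b2 b3 he hza.symm hzb.symm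
      (coeff_indep h1 hza.symm) (coeff_indep h2 hzb.symm) hno1
  · -- the two planes are disjoint : 1 or q
    have he : LinearIndependent F ![u1, v1, u2, v2] := by
      rw [Fintype.linearIndependent_iff]
      intro g hg
      rw [Fin.sum_univ_four] at hg
      simp only [Matrix.cons_val_zero, Matrix.cons_val_one, Matrix.head_cons,
        Matrix.cons_val_two, Matrix.tail_cons, Matrix.cons_val_three] at hg
      set w : Fin 5 → F := g 0 • u1 + g 1 • v1 with hw
      have hwU1 : w ∈ U1 :=
        Submodule.add_mem _ (Submodule.smul_mem _ _ hu1U1) (Submodule.smul_mem _ _ hv1U1)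
      have hwU2 : w ∈ U2 := by
        have h5 : w = -(g 2 • u2 + g 3 • v2) := by
          have h6 := hg
          rw [add_assoc] at h6
          exact eq_neg_of_add_eq_zero_left h6
        rw [h5]
        exact Submodule.neg_mem _
          (Submodule.add_mem _ (Submodule.smul_mem _ _ hu2U2) (Submodule.smul_mem _ _ hv2U2))
      have hw0 : w = 0 := by
        by_contra h
        exact hcase ⟨w, h, hwU1, hwU2⟩
      obtain ⟨h0, h1⟩ := hv1 (g 0) (g 1) (hw ▸ hw0)
      have hg' : g 2 • u2 + g 3 • v2 = 0 := by
        rw [hw0] at hg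
        rw [add_assoc, zero_add] at hg
        exact hg
      obtain ⟨h2', h3⟩ := hv2 (g 2) (g 3) hg'
      intro i
      fin_cases i <;> simp [h0, h1, h2', h3]
    rcases case_d0 hK z1 z2 u1 v1 u2 v2 α1 β1 α2 β2 he hz1 hz2 hc1 hc2 with h | h
    · exact Or.inl h
    · exact Or.inr (Or.inl h)

end CaseD1


lemma sigma_iff_low1 (P : Projectivization K (Fin 5 → K)) :
    P ∈ sigmaSet F K ↔ low1 F P.rep := by
  constructor
  · rintro ⟨w, c, h⟩; exact ⟨c, w, h⟩
  · rintro ⟨c, w, h⟩; exact ⟨w, c, h⟩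

lemma rep_mk_smul {v : Fin 5 → K} (hv : v ≠ 0) :
    ∃ a : Kˣ, (Projectivization.mk K v hv).rep = (a : K) • v := by
  have h := Projectivization.mk_rep (Projectivization.mk K v hv)
  obtain ⟨a, ha⟩ := (Projectivization.mk_eq_mk_iff K _ _ _ _).mp h
  exact ⟨a, by rw [← ha, Units.smul_def]⟩

lemma mem_S_iff (W : Submodule K (Fin 5 → K))
    (hdisj : ∀ P : Projectivization K (Fin 5 → K), P.rep ∈ W → P ∉ sigmaSet F K)
    (P : Projectivization K (Fin 5 → K)) :
    (P.rep ∈ W ∧ P ∈ omega2Set F K) ↔ (P.rep ∈ W ∧ low2 F P.rep) := by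
  constructor
  · rintro ⟨hw, hns, Q1, Q2, hQ1, hQ2, hne, hsp⟩
    refine ⟨hw, ?_⟩
    obtain ⟨w1, c1, h1⟩ := hQ1
    obtain ⟨w2, c2, h2⟩ := hQ2
    obtain ⟨a, b, hab⟩ := Submodule.mem_span_pair.mp hsp
    refine ⟨a * c1, b * c2, w1, w2, ?_⟩
    rw [← hab, h1, h2, smul_smul, smul_smul]
    rfl
  · rintro ⟨hw, hlow⟩
    have hns : P ∉ sigmaSet F K := hdisj P hw
    have hn1 : ¬ low1 F P.rep := fun h => hns ((sigma_iff_low1 P).mpr h)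
    obtain ⟨α, β, u, v, hz⟩ := hlow
    have hpu : (phi F u : Fin 5 → K) ≠ 0 := by
      intro h
      exact hn1 ⟨β, v, by rw [hz, h, smul_zero, zero_add]⟩
    have hpv : (phi F v : Fin 5 → K) ≠ 0 := by
      intro h
      exact hn1 ⟨α, u, by rw [hz, h, smul_zero, add_zero]⟩
    obtain ⟨a, ha⟩ := rep_mk_smul hpu
    obtain ⟨b, hb⟩ := rep_mk_smul hpv
    refine ⟨hw, hns, Projectivization.mk K (phi F u) hpu, Projectivization.mk K (phi F v) hpv,
      ⟨u, (a : K), ha⟩, ⟨v, (b : K), hb⟩, ?_, ?_⟩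
    · intro h
      obtain ⟨d, hd⟩ := (Projectivization.mk_eq_mk_iff K _ _ _ _).mp h
      rw [Units.smul_def] at hd
      apply hn1
      refine ⟨α * (d : K) + β, v, ?_⟩
      rw [hz, ← hd, add_smul, smul_smul]
    · refine Submodule.mem_span_pair.mpr ⟨α * (a : K)⁻¹, β * (b : K)⁻¹, ?_⟩
      rw [ha, hb, smul_smul, smul_smul, mul_assoc, mul_assoc,
        inv_mul_cancel₀ (Units.ne_zero a), inv_mul_cancel₀ (Units.ne_zero b), mul_one, mul_one,
        hz]

theorem stmt_7' {q : ℕ} (hq : IsPrimePow q) (F K : Type*) [Field F] [Fintype F]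
    [Field K] [Algebra F K] (hF : Fintype.card F = q) (hK : Module.finrank F K = 5)
    (W : Submodule K (Fin 5 → K)) (hW : Module.finrank K W = 2)
    (hdisj : ∀ P : Projectivization K (Fin 5 → K), P.rep ∈ W → P ∉ sigmaSet F K) :
    ({P : Projectivization K (Fin 5 → K) | P.rep ∈ W ∧ P ∈ omega2Set F K}).ncard ∈
      ({0, 1, 2, q + 1, q ^ 2 + q + 1} : Set ℕ) := by
  classical
  subst hF
  haveI hFD : FiniteDimensional F K := FiniteDimensional.of_finrank_pos (by rw [hK]; omega)
  haveI : Finite K := Module.finite_of_finite F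
  haveI : Finite (Projectivization K (Fin 5 → K)) := Quotient.finite _
  set S := {P : Projectivization K (Fin 5 → K) | P.rep ∈ W ∧ P ∈ omega2Set F K} with hS
  have hSchar : ∀ P, P ∈ S ↔ (P.rep ∈ W ∧ low2 F P.rep) := fun P => mem_S_iff W hdisj P
  by_cases hsub : S.Subsingleton
  · rcases hsub.eq_empty_or_singleton with h | ⟨P, hP⟩
    · rw [h, Set.ncard_empty]
      simp
    · rw [hP, Set.ncard_singleton]
      simp
  · rw [Set.not_subsingleton_iff] at hsub
    obtain ⟨P1, hP1, P2, hP2, hP12⟩ := hsub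
    set z1 := P1.rep with hz1def
    set z2 := P2.rep with hz2def
    have hz1W : z1 ∈ W := ((hSchar P1).mp hP1).1
    have hz2W : z2 ∈ W := ((hSchar P2).mp hP2).1
    have hl1 : low2 F z1 := ((hSchar P1).mp hP1).2
    have hl2 : low2 F z2 := ((hSchar P2).mp hP2).2
    have hz1ne : z1 ≠ 0 := P1.rep_nonzero
    have hz2ne : z2 ≠ 0 := P2.rep_nonzero
    have hind : ∀ s t : K, s • z1 + t • z2 = 0 → s = 0 ∧ t = 0 := by
      intro s t h
      by_cases hs : s = 0
      · subst hs
        rw [zero_smul, zero_add] at h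
        exact ⟨rfl, (smul_eq_zero.mp h).resolve_right hz2ne⟩
      · exfalso
        apply hP12
        have h5 : s • z1 = -(t • z2) := eq_neg_of_add_eq_zero_left h
        have hz1e : z1 = (-(s⁻¹ * t)) • z2 := by
          calc z1 = (s⁻¹ * s) • z1 := by rw [inv_mul_cancel₀ hs, one_smul]
          _ = s⁻¹ • (s • z1) := by rw [mul_smul]
          _ = s⁻¹ • (-(t • z2)) := by rw [h5]
          _ = (-(s⁻¹ * t)) • z2 := by rw [smul_neg, smul_smul, ← neg_smul]
        have hcne : (-(s⁻¹ * t)) ≠ 0 := by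
          intro h0
          rw [h0, zero_smul] at hz1e
          exact hz1ne hz1e
        rw [← Projectivization.mk_rep P1, ← Projectivization.mk_rep P2,
          Projectivization.mk_eq_mk_iff]
        exact ⟨Units.mk0 _ hcne, by rw [Units.smul_def, Units.val_mk0, ← hz1e]⟩
    have hno1 : ∀ s t : K, ¬(s = 0 ∧ t = 0) → ¬ low1 F (s • z1 + t • z2) := by
      intro s t hst hlow
      set v := s • z1 + t • z2 with hv
      have hvW : v ∈ W :=
        Submodule.add_mem _ (Submodule.smul_mem _ _ hz1W) (Submodule.smul_mem _ _ hz2W)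
      have hvne : v ≠ 0 := fun h => hst (hind s t h)
      obtain ⟨a, ha⟩ := rep_mk_smul hvne
      have hrepW : (Projectivization.mk K v hvne).rep ∈ W := by
        rw [ha]; exact Submodule.smul_mem _ _ hvW
      apply hdisj _ hrepW
      rw [sigma_iff_low1, ha]
      exact low1_smul _ hlow
    have hWspan : Submodule.span K ({z1, z2} : Set (Fin 5 → K)) = W := by
      refine Submodule.eq_of_le_of_finrank_le ?_ ?_
      · rw [Submodule.span_le]
        rintro x (rfl | rfl) <;> assumption
      · rw [hW, finrank_span_pair_eq hind]
    set Tset := {t : K | low2 F (z1 + t • z2)} with hT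
    have hgnz : ∀ t : K, z1 + t • z2 ≠ 0 := by
      intro t h
      exact one_ne_zero (hind 1 t (by rw [one_smul]; exact h)).1
    set g : K → Projectivization K (Fin 5 → K) :=
      fun t => Projectivization.mk K (z1 + t • z2) (hgnz t) with hg
    have hSeq : S = insert P2 (g '' Tset) := by
      ext P
      constructor
      · intro hP
        obtain ⟨a, b, hab⟩ := Submodule.mem_span_pair.mp (hWspan ▸ hP.1)
        by_cases ha0 : a = 0
        · left
          subst ha0
          rw [zero_smul, zero_add] at hab
          have hb : b ≠ 0 := by
            intro h
            rw [h, zero_smul] at hab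
            exact P.rep_nonzero hab.symm
          rw [← Projectivization.mk_rep P, ← Projectivization.mk_rep P2,
            Projectivization.mk_eq_mk_iff]
          exact ⟨Units.mk0 b hb, by rw [Units.smul_def, Units.val_mk0]; exact hab⟩
        · right
          have heq : P.rep = a • (z1 + (a⁻¹ * b) • z2) := by
            rw [smul_add, smul_smul, mul_inv_cancel_left₀ ha0, ← hab]
          have hl : low2 F P.rep := ((hSchar P).mp hP).2
          refine ⟨a⁻¹ * b, ?_, ?_⟩
          · show low2 F (z1 + (a⁻¹ * b) • z2)
            have := low2_smul a⁻¹ hl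
            rw [heq, smul_smul, inv_mul_cancel₀ ha0, one_smul] at this
            exact this
          · show Projectivization.mk K (z1 + (a⁻¹ * b) • z2) _ = P
            rw [← Projectivization.mk_rep P, Projectivization.mk_eq_mk_iff]
            refine ⟨(Units.mk0 a ha0)⁻¹, ?_⟩
            rw [Units.smul_def, heq, smul_smul]
            simp [inv_mul_cancel₀ ha0]
      · rintro (rfl | ⟨t, ht, rfl⟩)
        · exact hP2
        · refine (hSchar _).mpr ⟨?_, ?_⟩
          · obtain ⟨a, ha⟩ := rep_mk_smul (hgnz t)
            rw [ha]
            exact Submodule.smul_mem _ _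
              (Submodule.add_mem _ hz1W (Submodule.smul_mem _ _ hz2W))
          · obtain ⟨a, ha⟩ := rep_mk_smul (hgnz t)
            rw [ha]
            exact low2_smul _ ht
    have hP2img : P2 ∉ g '' Tset := by
      rintro ⟨t, ht, hgt⟩
      have h6 : Projectivization.mk K (z1 + t • z2) (hgnz t)
          = Projectivization.mk K P2.rep P2.rep_nonzero := by
        rw [Projectivization.mk_rep]; exact hgt
      obtain ⟨u, hu⟩ := (Projectivization.mk_eq_mk_iff K _ _ _ _).mp h6
      rw [Units.smul_def] at hu
      have h7 : (1:K) • z1 + (t - (u:K)) • z2 = 0 := by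
        have h8 : (1:K) • z1 + (t - (u:K)) • z2 = (z1 + t • z2) - (u:K) • z2 := by
          rw [one_smul, sub_smul]; abel
        rw [h8, hu, sub_self]
      exact one_ne_zero (hind _ _ h7).1
    have hginj : Set.InjOn g Tset := by
      intro t _ t' _ h
      obtain ⟨u, hu⟩ := (Projectivization.mk_eq_mk_iff K _ _ _ _).mp h
      rw [Units.smul_def, smul_add, smul_smul] at hu
      have heq : (1 - (u:K)) • z1 + (t - (u:K) * t') • z2 = 0 := by
        have h8 : (1 - (u:K)) • z1 + (t - (u:K) * t') • z2
            = (z1 + t • z2) - ((u:K) • z1 + ((u:K) * t') • z2) := by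
          rw [sub_smul, sub_smul, one_smul]; abel
        rw [h8, hu, sub_self]
      obtain ⟨h1, h2⟩ := hind _ _ heq
      have hu1 : (u:K) = 1 := (sub_eq_zero.mp h1).symm
      have := sub_eq_zero.mp h2
      rw [hu1, one_mul] at this
      exact this
    rw [hSeq, Set.ncard_insert_of_notMem hP2img (Set.toFinite _),
      Set.ncard_image_of_injOn hginj]
    rcases main_count hK z1 z2 hind hno1 hl1 hl2 with h | h | h <;> rw [h]
    · right; right; left; rfl
    · right; right; right; left; rfl
    · right; right; right; right; rfl

end Stmt7Aux

/-- A line of `PG(4,q⁵)` disjoint from the canonical subgeometry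
`Σ ≅ PG(4,q)` meets `Ω₂` in exactly `0, 1, 2, q+1` or `q²+q+1` points. -/
theorem stmt_7 {q : ℕ} (hq : IsPrimePow q) (F K : Type*) [Field F] [Fintype F]
    [Field K] [Algebra F K] (hF : Fintype.card F = q) (hK : Module.finrank F K = 5)
    (W : Submodule K (Fin 5 → K)) (hW : Module.finrank K W = 2)
    (hdisj : ∀ P : Projectivization K (Fin 5 → K), P.rep ∈ W → P ∉ sigmaSet F K) :
    ({P : Projectivization K (Fin 5 → K) | P.rep ∈ W ∧ P ∈ omega2Set F K}).ncard ∈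
      ({0, 1, 2, q + 1, q ^ 2 + q + 1} : Set ℕ) :=
  Stmt7Aux.stmt_7' hq F K hF hK W hW hdisj
end

section
/- Let q be a prime power and γ0, γ1', γ2' ∈ F_{q^5} with γ0 ∉ F_q. Suppose dim_{F_q}⟨1, γ0, γ1', γ0γ1'⟩ = 3 and ⟨1, γ0, γ2', γ0γ2'⟩ = ⟨1, γ0, γ1', γ0γ1'⟩ as F_q-subspaces. Then 1, γ1', γ2' are linearly dependent over F_q. -/
/-- For `γ0 ∈ F_{q⁵} \ F_q`, if `dim_{F_q}⟨1, γ0, γ1', γ0γ1'⟩ = 3` and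
`⟨1, γ0, γ2', γ0γ2'⟩ = ⟨1, γ0, γ1', γ0γ1'⟩`, then `1, γ1', γ2'` are `F_q`-linearly
dependent. -/
theorem stmt_17 {q : ℕ} (hq : IsPrimePow q) (F K : Type*) [Field F] [Fintype F]
    [Field K] [Algebra F K] (hF : Fintype.card F = q) (hK : Module.finrank F K = 5)
    (γ0 γ1' γ2' : K) (hγ0 : γ0 ∉ Set.range (algebraMap F K))
    (hdim : Module.finrank F
      (Submodule.span F ({1, γ0, γ1', γ0 * γ1'} : Set K)) = 3)
    (heq : Submodule.span F ({1, γ0, γ2', γ0 * γ2'} : Set K) =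
      Submodule.span F ({1, γ0, γ1', γ0 * γ1'} : Set K)) :
    ¬ LinearIndependent F ![(1 : K), γ1', γ2'] := by
  have hfd : FiniteDimensional F K := FiniteDimensional.of_finrank_pos (by omega)
  -- minimal polynomial of γ0 has degree 5
  have hint : IsIntegral F γ0 := IsIntegral.of_finite F γ0
  have hdeg : (minpoly F γ0).natDegree = 5 := by
    have h1 : Module.finrank F (IntermediateField.adjoin F {γ0} : IntermediateField F K)
        = (minpoly F γ0).natDegree := IntermediateField.adjoin.finrank hint
    have hdvd : Module.finrank F (IntermediateField.adjoin F {γ0} : IntermediateField F K)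
        ∣ 5 := by
      refine ⟨Module.finrank (IntermediateField.adjoin F {γ0} : IntermediateField F K) K, ?_⟩
      rw [← hK, Module.finrank_mul_finrank]
    have hne1 : Module.finrank F (IntermediateField.adjoin F {γ0} : IntermediateField F K)
        ≠ 1 := by
      intro h
      rw [IntermediateField.finrank_eq_one_iff] at h
      exact hγ0 (by
        have : γ0 ∈ (IntermediateField.adjoin F {γ0} : IntermediateField F K) :=
          IntermediateField.mem_adjoin_simple_self F γ0
        rw [h, IntermediateField.mem_bot] at this
        exact this)
    rw [← h1]
    rcases (by norm_num : Nat.Prime 5).eq_one_or_self_of_dvd _ hdvd with h | h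
    · exact absurd h hne1
    · exact h
  -- powers 1, γ0, γ0², γ0³ are linearly independent
  have hpow5 : LinearIndependent F fun i : Fin 5 => γ0 ^ (i : ℕ) := by
    have := linearIndependent_pow (K := F) γ0
    rwa [hdeg] at this
  have hpow : LinearIndependent F fun i : Fin 4 => γ0 ^ (i : ℕ) :=
    hpow5.comp (Fin.castLE (by norm_num)) (Fin.castLE_injective _)
  -- the main argument
  intro hli
  set V : Submodule F K := Submodule.span F ({1, γ0, γ1', γ0 * γ1'} : Set K) with hV
  have h1V : (1 : K) ∈ V := Submodule.subset_span (by simp)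
  have hγ0V : γ0 ∈ V := Submodule.subset_span (by simp)
  have hγ1V : γ1' ∈ V := Submodule.subset_span (by simp)
  have hγ0γ1V : γ0 * γ1' ∈ V := Submodule.subset_span (by simp)
  have hγ2V : γ2' ∈ V := by
    rw [← heq]; exact Submodule.subset_span (by simp)
  have hγ0γ2V : γ0 * γ2' ∈ V := by
    rw [← heq]; exact Submodule.subset_span (by simp)
  set U : Submodule F K := V ⊓ Submodule.comap (LinearMap.mulLeft F γ0) V with hU
  have h1U : (1 : K) ∈ U := ⟨h1V, by simpa using hγ0V⟩
  have hγ1U : γ1' ∈ U := ⟨hγ1V, by simpa using hγ0γ1V⟩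
  have hγ2U : γ2' ∈ U := ⟨hγ2V, by simpa using hγ0γ2V⟩
  -- span of the independent family is inside U, so finrank U ≥ 3
  have hspanU : Submodule.span F (Set.range ![(1 : K), γ1', γ2']) ≤ U := by
    rw [Submodule.span_le]
    rintro x ⟨i, rfl⟩
    fin_cases i <;> simpa using ‹_›
  have h3 : 3 ≤ Module.finrank F U := by
    have := finrank_span_eq_card hli
    simp only [Fintype.card_fin] at this
    calc 3 = Module.finrank F (Submodule.span F (Set.range ![(1 : K), γ1', γ2'])) := this.symm
    _ ≤ Module.finrank F U := Submodule.finrank_mono hspanU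
  have hUV : U = V := Submodule.eq_of_le_of_finrank_le inf_le_left (by rw [hdim]; exact h3)
  -- V is closed under multiplication by γ0
  have hmul : ∀ x ∈ V, γ0 * x ∈ V := by
    intro x hx
    rw [← hUV] at hx
    exact hx.2
  have hγ02 : γ0 ^ 2 ∈ V := by
    have := hmul γ0 hγ0V; rwa [← sq] at this
  have hγ03 : γ0 ^ 3 ∈ V := by
    have := hmul _ hγ02; rwa [← pow_succ'] at this
  -- but then V contains 4 independent vectors, contradiction
  have hspanV : Submodule.span F (Set.range fun i : Fin 4 => γ0 ^ (i : ℕ)) ≤ V := by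
    rw [Submodule.span_le]
    rintro x ⟨i, rfl⟩
    fin_cases i <;> simp_all [pow_succ]
  have h4 : 4 ≤ Module.finrank F V := by
    have := finrank_span_eq_card hpow
    simp only [Fintype.card_fin] at this
    calc 4 = Module.finrank F (Submodule.span F (Set.range fun i : Fin 4 => γ0 ^ (i : ℕ))) :=
        this.symm
    _ ≤ Module.finrank F V := Submodule.finrank_mono hspanV
  rw [hdim] at h4
  omega
end

section
/- Let q be a prime power and γ, δ1, δ2 ∈ F_{q^5} with γ ∉ F_q and dim_{F_q}⟨1, γ, γδ1, γδ2⟩ = 4. If γδ1 = c0 + c1γ + c2γ^2 + c3γδ2 for some c0,c1,c2,c3 ∈ F_q (so c2 ≠ 0), then it is impossible that both γ^2δ1 and γ^2δ2 lie in the F_q-span of {1, γ, γ^2, γδ2}. -/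
open Polynomial

/-- Extract coefficients from membership in a span of four elements. -/
lemma mem_span4 {F K : Type*} [Field F] [AddCommGroup K] [Module F K]
    {x a b c d : K} (h : x ∈ Submodule.span F ({a, b, c, d} : Set K)) :
    ∃ p q r s : F, x = p • a + q • b + r • c + s • d := by
  rw [show ({a, b, c, d} : Set K) = insert a (insert b (insert c {d})) from rfl,
    Submodule.mem_span_insert] at h
  obtain ⟨p, y, hy, rfl⟩ := h
  rw [Submodule.mem_span_insert] at hy
  obtain ⟨q, z, hz, rfl⟩ := hy
  rw [Submodule.mem_span_insert] at hz
  obtain ⟨r, w, hw, rfl⟩ := hz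
  rw [Submodule.mem_span_singleton] at hw
  obtain ⟨s, rfl⟩ := hw
  exact ⟨p, q, r, s, by abel⟩

/-- Let `γ ∉ F_q` with `dim_{F_q}⟨1, γ, γδ1, γδ2⟩ = 4` and
`γδ1 = c0 + c1γ + c2γ² + c3γδ2` for some `c0,…,c3 ∈ F_q`.  Then it is impossible that
both `γ²δ1` and `γ²δ2` lie in `⟨1, γ, γ², γδ2⟩`. -/
theorem stmt_18 {q : ℕ} (hq : IsPrimePow q) (F K : Type*) [Field F] [Fintype F]
    [Field K] [Algebra F K] (hF : Fintype.card F = q) (hK : Module.finrank F K = 5)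
    (γ δ1 δ2 : K) (hγ : γ ∉ Set.range (algebraMap F K))
    (hdim : Module.finrank F
      (Submodule.span F ({1, γ, γ * δ1, γ * δ2} : Set K)) = 4)
    (c0 c1 c2 c3 : F)
    (hc : γ * δ1 = algebraMap F K c0 + algebraMap F K c1 * γ + algebraMap F K c2 * γ ^ 2 +
      algebraMap F K c3 * (γ * δ2)) :
    ¬ (γ ^ 2 * δ1 ∈ Submodule.span F ({1, γ, γ ^ 2, γ * δ2} : Set K) ∧
       γ ^ 2 * δ2 ∈ Submodule.span F ({1, γ, γ ^ 2, γ * δ2} : Set K)) := by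
  classical
  rintro ⟨h1, h2⟩
  have hfd : FiniteDimensional F K := FiniteDimensional.of_finrank_pos (by omega)
  have hint : IsIntegral F γ := IsIntegral.of_finite F γ
  have hdvd : (minpoly F γ).natDegree ∣ 5 := hK ▸ minpoly.degree_dvd hint
  have hne1 : (minpoly F γ).natDegree ≠ 1 := by
    intro h
    exact hγ ((minpoly.degree_eq_one_iff).mp
      (by rw [Polynomial.degree_eq_natDegree (minpoly.ne_zero hint), h]; rfl))
  have hdeg : (minpoly F γ).natDegree = 5 := by
    rcases (Nat.Prime.eq_one_or_self_of_dvd (by norm_num) _ hdvd) with h | h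
    · exact absurd h hne1
    · exact h
  have hli : LinearIndependent F fun i : Fin 5 => γ ^ (i : ℕ) := by
    have := linearIndependent_pow (K := F) γ
    rwa [hdeg] at this
  -- key linear independence statement
  have key : ∀ a b c d e : F, algebraMap F K a + algebraMap F K b * γ +
      algebraMap F K c * γ ^ 2 + algebraMap F K d * γ ^ 3 + algebraMap F K e * γ ^ 4 = 0 →
      a = 0 ∧ b = 0 ∧ c = 0 ∧ d = 0 ∧ e = 0 := by
    intro a b c d e h
    have hz := Fintype.linearIndependent_iff.mp hli ![a, b, c, d, e] (by
      rw [Fin.sum_univ_five]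
      simp only [Matrix.cons_val_zero, Matrix.cons_val_one, Matrix.head_cons, Algebra.smul_def]
      simpa using h)
    exact ⟨hz 0, hz 1, hz 2, hz 3, hz 4⟩
  -- c2 ≠ 0
  have hc2 : c2 ≠ 0 := by
    intro h0
    have hmem : γ * δ1 ∈ Submodule.span F (↑({1, γ, γ * δ2} : Finset K) : Set K) := by
      rw [hc, h0]
      have m1 : (1 : K) ∈ Submodule.span F (↑({1, γ, γ * δ2} : Finset K) : Set K) :=
        Submodule.subset_span (by simp)
      have m2 : γ ∈ Submodule.span F (↑({1, γ, γ * δ2} : Finset K) : Set K) :=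
        Submodule.subset_span (by simp)
      have m3 : γ * δ2 ∈ Submodule.span F (↑({1, γ, γ * δ2} : Finset K) : Set K) :=
        Submodule.subset_span (by simp)
      have := Submodule.add_mem _ (Submodule.add_mem _
        (Submodule.add_mem _ (Submodule.smul_mem _ c0 m1) (Submodule.smul_mem _ c1 m2))
        (Submodule.smul_mem _ (0 : F) m1)) (Submodule.smul_mem _ c3 m3)
      simpa [Algebra.smul_def] using this
    have hle : Submodule.span F ({1, γ, γ * δ1, γ * δ2} : Set K) ≤
        Submodule.span F (↑({1, γ, γ * δ2} : Finset K) : Set K) := by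
      rw [Submodule.span_le]
      intro x hx
      rcases hx with rfl | rfl | rfl | rfl
      · exact Submodule.subset_span (by simp)
      · exact Submodule.subset_span (by simp)
      · exact hmem
      · exact Submodule.subset_span (by simp)
    have h4 : (4 : ℕ) ≤ Module.finrank F
        (Submodule.span F (↑({1, γ, γ * δ2} : Finset K) : Set K)) :=
      hdim ▸ Submodule.finrank_mono hle
    have h3 : Module.finrank F
        (Submodule.span F (↑({1, γ, γ * δ2} : Finset K) : Set K)) ≤ 3 := by
      refine le_trans (finrank_span_finset_le_card _) ?_
      refine le_trans (Finset.card_insert_le _ _) ?_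
      have := Finset.card_insert_le γ ({γ * δ2} : Finset K)
      simp only [Finset.card_singleton] at this ⊢
      omega
    omega
  set S := Submodule.span F ({1, γ, γ ^ 2, γ * δ2} : Set K) with hS
  have m1 : (1 : K) ∈ S := Submodule.subset_span (by simp)
  have m2 : γ ∈ S := Submodule.subset_span (by simp)
  have m3 : γ ^ 2 ∈ S := Submodule.subset_span (by simp)
  have m4 : γ * δ2 ∈ S := Submodule.subset_span (by simp)
  -- γ³ ∈ S
  have hg3 : γ ^ 3 ∈ S := by
    have hmem : c2 • γ ^ 3 ∈ S := by
      have heq : c2 • γ ^ 3 = γ ^ 2 * δ1 + (-c0) • γ + (-c1) • γ ^ 2 +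
          (-c3) • (γ ^ 2 * δ2) := by
        simp only [Algebra.smul_def, map_neg]
        linear_combination (-γ) * hc
      rw [heq]
      exact Submodule.add_mem _ (Submodule.add_mem _ (Submodule.add_mem _ h1
        (Submodule.smul_mem _ _ m2)) (Submodule.smul_mem _ _ m3)) (Submodule.smul_mem _ _ h2)
    have := Submodule.smul_mem S c2⁻¹ hmem
    rwa [smul_smul, inv_mul_cancel₀ hc2, one_smul] at this
  obtain ⟨p, qq, r, s, hx3⟩ := mem_span4 hg3
  simp only [smul_eq_mul, Algebra.smul_def, mul_one] at hx3
  by_cases hs : s = 0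
  · -- γ³ ∈ span{1,γ,γ²}: contradiction
    have := key (-p) (-qq) (-r) 1 0 (by
      simp only [map_neg, map_one, map_zero]
      rw [hs] at hx3
      simp only [map_zero, zero_mul, add_zero] at hx3
      linear_combination hx3)
    exact one_ne_zero this.2.2.2.1
  · obtain ⟨u, v, w, t, hy⟩ := mem_span4 h2
    simp only [smul_eq_mul, Algebra.smul_def, mul_one] at hy
    have := key (s * u - t * p) (s * v - t * qq + p) (s * w - t * r + qq) (t + r) (-1) (by
      simp only [map_mul, map_add, map_sub, map_neg, map_one]
      linear_combination (algebraMap F K t - γ) * hx3 - algebraMap F K s * hy)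
    have h5 := this.2.2.2.2
    rw [neg_eq_zero] at h5
    exact one_ne_zero h5
end
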